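/- Let S1, m, u be rational numbers with S1 ≠ 0, 3m^2+1 ≠ 0 and (m+1)u^2 − m + 1 ≠ 0. Define h = −2S1^2·u·((m+1)(m^2+1)u − m(m^2+3)) / ((3m^2+1)((m+1)u^2 − m + 1)), t1 = (S1^2 − h)/S1, s1 = ((3m^2+1)h − (m^2−1)S1^2)/((3m^2+1)S1), assume 2h + 3(s1+t1)(t1−S1) ≠ 0, define t2 = [−h^2 + (s1^2 + s1·S1 + S1^2)h + (s1+t1)(t1−S1)(s1^2 + (t1−S1)s1 + t1^2 − t1·S1 + S1^2)] / (2h + 3(s1+t1)(t1−S1)), and set T1 = s1 + t1 − S1 and T2 = t2. Then T1^2 − 4T2 = S1^2·φ(u) / ((3m^2+1)((m+1)u^2 − m + 1))^2, where φ(u) = (m^6 − 26m^4 − 31m^2 − 8)(m+1)^2·u^4 − 4m(m+1)(m^2+3)(m^4 − 6m^2 − 3)·u^3 + 2(m−1)(m+1)(3m^6 + 28m^4 + 31m^2 + 2)·u^2 − 4m(m−1)(m^2+3)(m^4 + 6m^2 + 1)·u + m^2(m+1)^2(m−1)^4. -/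

import Mathlib

theorem stmt_9 (S₁ m u h t₁ s₁ t₂ T₁ T₂ : ℚ) (hS₁ : S₁ ≠ 0)
    (hm : 3 * m ^ 2 + 1 ≠ 0)
    (hu : (m + 1) * u ^ 2 - m + 1 ≠ 0)
    (hh : h = -2 * S₁ ^ 2 * u * ((m + 1) * (m ^ 2 + 1) * u - m * (m ^ 2 + 3)) /
      ((3 * m ^ 2 + 1) * ((m + 1) * u ^ 2 - m + 1)))
    (ht₁ : t₁ = (S₁ ^ 2 - h) / S₁)
    (hs₁ : s₁ = ((3 * m ^ 2 + 1) * h - (m ^ 2 - 1) * S₁ ^ 2) /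
      ((3 * m ^ 2 + 1) * S₁))
    (hden : 2 * h + 3 * (s₁ + t₁) * (t₁ - S₁) ≠ 0)
    (ht₂ : t₂ = (-h ^ 2 + (s₁ ^ 2 + s₁ * S₁ + S₁ ^ 2) * h +
        (s₁ + t₁) * (t₁ - S₁) *
          (s₁ ^ 2 + (t₁ - S₁) * s₁ + t₁ ^ 2 - t₁ * S₁ + S₁ ^ 2)) /
      (2 * h + 3 * (s₁ + t₁) * (t₁ - S₁)))
    (hT₁ : T₁ = s₁ + t₁ - S₁) (hT₂ : T₂ = t₂) :
    T₁ ^ 2 - 4 * T₂ =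
      S₁ ^ 2 * ((m ^ 6 - 26 * m ^ 4 - 31 * m ^ 2 - 8) * (m + 1) ^ 2 * u ^ 4 -
          4 * m * (m + 1) * (m ^ 2 + 3) * (m ^ 4 - 6 * m ^ 2 - 3) * u ^ 3 +
          2 * (m - 1) * (m + 1) * (3 * m ^ 6 + 28 * m ^ 4 + 31 * m ^ 2 + 2) * u ^ 2 -
          4 * m * (m - 1) * (m ^ 2 + 3) * (m ^ 4 + 6 * m ^ 2 + 1) * u +
          m ^ 2 * (m + 1) ^ 2 * (m - 1) ^ 4) /
        ((3 * m ^ 2 + 1) * ((m + 1) * u ^ 2 - m + 1)) ^ 2 := by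
  have hP : s₁ + t₁ = 2 * (m ^ 2 + 1) * S₁ / (3 * m ^ 2 + 1) := by
    rw [ht₁, hs₁]; field_simp; ring
  have hQ : t₁ - S₁ = -(h / S₁) := by
    rw [ht₁]; field_simp; ring
  have hd : 2 * h + 3 * (s₁ + t₁) * (t₁ - S₁) = -4 * h / (3 * m ^ 2 + 1) := by
    rw [hP, hQ]; field_simp; ring
  have hh0 : h ≠ 0 := by
    intro h0
    apply hden
    rw [hd, h0]; simp
  have key : T₁ ^ 2 - 4 * T₂ =
      ((9 * m ^ 6 - 3 * m ^ 4 - 5 * m ^ 2 - 1) * h ^ 2 / S₁ ^ 2 +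
        (6 * m ^ 6 + 38 * m ^ 4 + 18 * m ^ 2 + 2) * h +
        m ^ 2 * (m ^ 2 - 1) ^ 2 * S₁ ^ 2) / (3 * m ^ 2 + 1) ^ 2 := by
    rw [hT₁, hT₂, ht₂, hd, hP, hQ, ht₁, hs₁]
    field_simp
    ring
  rw [key, hh]
  generalize hD : (m + 1) * u ^ 2 - m + 1 = D at hu ⊢
  field_simp
  rw [← hD]
  ring
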